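/- For each 0 ≤ t ≤ n-1, the number of parking functions p = (p_1,...,p_n) of length n with p_n = t, p_i < i for all i ≤ t, and p_j ≤ j for all t < j ≤ n-1, equals n!/(t+1). -/

import Mathlib

/-- `p` is a parking function of length `n`: some nondecreasing rearrangement
`q_1 ≤ ⋯ ≤ q_n` of `p` satisfies `q_j < j` (0-based: `q_i ≤ i`). -/
def IsParkingFn {n : ℕ} (p : Fin n → ℕ) : Prop :=
  ∃ τ : Equiv.Perm (Fin n), (Monotone fun i => p (τ i)) ∧ ∀ i : Fin n, p (τ i) ≤ (i : ℕ)

/-- A counting criterion for being a parking function. -/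
lemma isParkingFn_of_counts {n : ℕ} (p : Fin n → ℕ)
    (hcount : ∀ k : Fin n, (k : ℕ) + 1 ≤
      (Finset.univ.filter (fun j => p j ≤ (k : ℕ))).card) :
    IsParkingFn p := by
  refine ⟨Tuple.sort p, Tuple.monotone_sort p, fun i => ?_⟩
  by_contra hgt
  push_neg at hgt
  set τ := Tuple.sort p
  have hmono : Monotone (p ∘ τ) := Tuple.monotone_sort p
  set B : Finset (Fin n) := Finset.univ.filter (fun j => p (τ j) ≤ (i : ℕ)) with hB
  have hBsub : B ⊆ Finset.Iio i := by
    intro j hj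
    simp only [hB, Finset.mem_filter, Finset.mem_univ, true_and] at hj
    rw [Finset.mem_Iio]
    by_contra hji
    push_neg at hji
    have := hmono hji
    simp only [Function.comp] at this
    omega
  have himg : B.image τ = Finset.univ.filter (fun j => p j ≤ (i : ℕ)) := by
    ext a
    simp only [Finset.mem_image, hB, Finset.mem_filter, Finset.mem_univ, true_and]
    constructor
    · rintro ⟨j, hj, rfl⟩; exact hj
    · intro ha; exact ⟨τ.symm a, by simpa using ha, by simp⟩
  have hcard : (Finset.univ.filter (fun j => p j ≤ (i : ℕ))).card = B.card := by
    rw [← himg, Finset.card_image_of_injective _ τ.injective]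
  have h1 := hcount i
  rw [hcard] at h1
  have h2 : B.card ≤ (i : ℕ) := by
    calc B.card ≤ (Finset.Iio i).card := Finset.card_le_card hBsub
    _ = (i : ℕ) := Fin.card_Iio i
  omega

lemma isParkingFn_of_bounds {n t : ℕ} (hn : 1 ≤ n) (ht : t ≤ n - 1) (p : Fin n → ℕ)
    (hlast : p ⟨n - 1, Nat.sub_lt hn Nat.one_pos⟩ = t)
    (h1 : ∀ i : Fin n, (i : ℕ) < t → p i ≤ (i : ℕ))
    (h2 : ∀ i : Fin n, t ≤ (i : ℕ) → (i : ℕ) + 1 ≤ n - 1 → p i ≤ (i : ℕ) + 1) :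
    IsParkingFn p := by
  apply isParkingFn_of_counts
  intro k
  rcases lt_or_ge (k : ℕ) t with hk | hk
  · have hsub : Finset.Iic k ⊆ Finset.univ.filter (fun j => p j ≤ (k : ℕ)) := by
      intro j hj
      rw [Finset.mem_Iic] at hj
      have hjk : (j : ℕ) ≤ (k : ℕ) := hj
      simp only [Finset.mem_filter, Finset.mem_univ, true_and]
      exact le_trans (h1 j (lt_of_le_of_lt hjk hk)) hjk
    calc (k : ℕ) + 1 = (Finset.Iic k).card := (Fin.card_Iic k).symm
      _ ≤ _ := Finset.card_le_card hsub
  · set last : Fin n := ⟨n - 1, by omega⟩ with hlastdef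
    have hkle : (k : ℕ) ≤ n - 1 := by omega
    have hnotmem : last ∉ Finset.Iio k := by
      rw [Finset.mem_Iio]
      intro h
      have : (last : ℕ) < (k : ℕ) := h
      simp only [hlastdef] at this
      omega
    have hsub : insert last (Finset.Iio k) ⊆
        Finset.univ.filter (fun j => p j ≤ (k : ℕ)) := by
      intro j hj
      simp only [Finset.mem_filter, Finset.mem_univ, true_and]
      rcases Finset.mem_insert.mp hj with rfl | hj
      · rw [hlast]; exact hk
      · rw [Finset.mem_Iio] at hj
        have hjk : (j : ℕ) < (k : ℕ) := hj
        rcases lt_or_ge (j : ℕ) t with hjt | hjt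
        · exact le_trans (h1 j hjt) (le_of_lt hjk)
        · exact le_trans (h2 j hjt (by omega)) hjk
    calc (k : ℕ) + 1 = (insert last (Finset.Iio k)).card := by
          rw [Finset.card_insert_of_notMem hnotmem, Fin.card_Iio]
      _ ≤ _ := Finset.card_le_card hsub

/-- For `0 ≤ t ≤ n-1`, the number of parking functions `p` of length `n` with `p_n = t`,
`p_i < i` for all `i ≤ t` and `p_j ≤ j` for all `t < j ≤ n-1`, equals `n!/(t+1)`
(1-based indexing; 0-based index `i` corresponds to 1-based `i+1`). -/
theorem card_parking_with_last_coord (n t : ℕ) (hn : 1 ≤ n) (ht : t ≤ n - 1) :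
    Set.ncard {p : Fin n → ℕ | IsParkingFn p ∧ p ⟨n - 1, by omega⟩ = t ∧
      (∀ i : Fin n, (i : ℕ) + 1 ≤ t → p i < (i : ℕ) + 1) ∧
      (∀ i : Fin n, t < (i : ℕ) + 1 → (i : ℕ) + 1 ≤ n - 1 → p i ≤ (i : ℕ) + 1)} =
    n.factorial / (t + 1) := by
  classical
  set B : Fin n → Finset ℕ := fun i =>
    if (i : ℕ) = n - 1 then {t}
    else Finset.range (if (i : ℕ) < t then (i : ℕ) + 1 else (i : ℕ) + 2) with hB
  have hset : {p : Fin n → ℕ | IsParkingFn p ∧ p ⟨n - 1, by omega⟩ = t ∧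
      (∀ i : Fin n, (i : ℕ) + 1 ≤ t → p i < (i : ℕ) + 1) ∧
      (∀ i : Fin n, t < (i : ℕ) + 1 → (i : ℕ) + 1 ≤ n - 1 → p i ≤ (i : ℕ) + 1)} =
      ↑(Fintype.piFinset B) := by
    ext p
    simp only [Set.mem_setOf_eq, Finset.coe_sort_coe, Finset.mem_coe,
      Fintype.mem_piFinset]
    constructor
    · rintro ⟨_, hlast, h3, h4⟩ i
      simp only [hB]
      rcases eq_or_ne (i : ℕ) (n - 1) with hi | hi
      · have : i = ⟨n - 1, by omega⟩ := Fin.ext hi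
        rw [if_pos hi, this, hlast]; exact Finset.mem_singleton_self t
      · rw [if_neg hi]
        have hile : (i : ℕ) + 1 ≤ n - 1 := by have := i.isLt; omega
        rcases lt_or_ge (i : ℕ) t with hit | hit
        · rw [if_pos hit, Finset.mem_range]; exact h3 i hit
        · rw [if_neg (not_lt.mpr hit), Finset.mem_range]
          exact Nat.lt_succ_of_le (h4 i (by omega) hile)
    · intro hp
      have hlast : p ⟨n - 1, by omega⟩ = t := by
        have := hp ⟨n - 1, by omega⟩
        simp only [hB, if_pos rfl, Finset.mem_singleton] at this
        exact this
      have h1 : ∀ i : Fin n, (i : ℕ) < t → p i ≤ (i : ℕ) := by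
        intro i hit
        have hi : (i : ℕ) ≠ n - 1 := by omega
        have := hp i
        simp only [hB, if_neg hi, if_pos hit, Finset.mem_range] at this
        omega
      have h2 : ∀ i : Fin n, t ≤ (i : ℕ) → (i : ℕ) + 1 ≤ n - 1 → p i ≤ (i : ℕ) + 1 := by
        intro i hit hile
        have hi : (i : ℕ) ≠ n - 1 := by omega
        have := hp i
        simp only [hB, if_neg hi, if_neg (not_lt.mpr hit), Finset.mem_range] at this
        omega
      exact ⟨isParkingFn_of_bounds hn ht p hlast h1 h2, hlast,
        fun i hi => Nat.lt_succ_of_le (h1 i (by omega)),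
        fun i hi hile => h2 i (by omega) hile⟩
  rw [hset, Set.ncard_coe_finset, Fintype.card_piFinset]
  set c : ℕ → ℕ := fun i =>
    if i = n - 1 then 1 else if i < t then i + 1 else i + 2 with hc
  have hcardB : ∀ i : Fin n, (B i).card = c (i : ℕ) := by
    intro i
    simp only [hB, hc]
    rcases eq_or_ne (i : ℕ) (n - 1) with hi | hi
    · rw [if_pos hi, if_pos hi, Finset.card_singleton]
    · rw [if_neg hi, if_neg hi, Finset.card_range]
  calc ∏ i : Fin n, (B i).card = ∏ i ∈ Finset.range n, c i := by
        rw [Finset.prod_congr rfl (fun i _ => hcardB i), Fin.prod_univ_eq_prod_range]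
    _ = n.factorial / (t + 1) := by
        have key : (t + 1) * ∏ i ∈ Finset.range n, c i = n.factorial := by
          have hn' : n = (n - 1) + 1 := by omega
          rw [hn', Finset.prod_range_succ]
          have hclast : c (n - 1) = 1 := by simp [hc]
          rw [hclast, mul_one]
          have hcongr : ∏ i ∈ Finset.range (n - 1), c i =
              ∏ i ∈ Finset.range (n - 1), (if i < t then i + 1 else i + 2) := by
            apply Finset.prod_congr rfl
            intro i hi
            rw [Finset.mem_range] at hi
            simp only [hc, if_neg (by omega : i ≠ n - 1)]
          rw [hcongr]
          rw [Finset.range_eq_Ico, ← Finset.prod_Ico_consecutive _ (Nat.zero_le t) ht]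
          have hA : ∏ i ∈ Finset.Ico 0 t, (if i < t then i + 1 else i + 2) =
              t.factorial := by
            rw [← Finset.range_eq_Ico, ← Finset.prod_range_add_one_eq_factorial]
            exact Finset.prod_congr rfl fun i hi => by
              rw [Finset.mem_range] at hi; rw [if_pos hi]
          have hC : ∏ i ∈ Finset.Ico t (n - 1), (if i < t then i + 1 else i + 2) =
              ∏ i ∈ Finset.Ico (t + 2) (n + 1), i := by
            rw [Finset.prod_Ico_eq_prod_range, Finset.prod_Ico_eq_prod_range]
            apply Finset.prod_congr (by congr 1; omega)
            intro i _
            rw [if_neg (by omega)]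
            omega
          rw [hA, hC, ← mul_assoc]
          have hfac : (t + 1) * t.factorial = (t + 1).factorial := rfl
          rw [hfac, ← Finset.prod_Ico_id_eq_factorial (t + 1), ← hn',
            ← Finset.prod_Ico_id_eq_factorial n,
            show t + 1 + 1 = t + 2 from rfl]
          exact Finset.prod_Ico_consecutive _ (by omega) (by omega)
        rw [← key, Nat.mul_div_cancel_left _ (by omega : 0 < t + 1)]
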